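/- arXiv:2307.11923 — 6 statements merged into one kernel-verified Lean document; each statement's English description precedes it below -/
import Mathlib

section
/- For ω > 0, (ω³/(6π)) ∫₀^{2π/ω} ∫₀^τ ∫₀^s sin(ωτ)(cos(ωs) sin(ωp) - sin(ωs) cos(ωp)) dp ds dτ = 1/2. -/
open Real intervalIntegral

private lemma hlin (ω p : ℝ) : HasDerivAt (fun x : ℝ => ω * x) ω p := by
  simpa using (hasDerivAt_id p).const_mul ω

private lemma L1 (ω : ℝ) (hω : ω ≠ 0) (s : ℝ) :
    (∫ p in (0:ℝ)..s, (Real.cos (ω * s) * Real.sin (ω * p) -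
      Real.sin (ω * s) * Real.cos (ω * p))) = (Real.cos (ω * s) - 1) / ω := by
  have key : ∀ p : ℝ, HasDerivAt
      (fun p => -(Real.cos (ω * s) * Real.cos (ω * p)) / ω -
        Real.sin (ω * s) * Real.sin (ω * p) / ω)
      (Real.cos (ω * s) * Real.sin (ω * p) - Real.sin (ω * s) * Real.cos (ω * p)) p := by
    intro p
    have h1 := ((hlin ω p).cos.const_mul (Real.cos (ω * s))).neg.div_const ω
    have h2 := ((hlin ω p).sin.const_mul (Real.sin (ω * s))).div_const ω
    refine (h1.sub h2).congr_deriv ?_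
    symm
    field_simp
  have hint : IntervalIntegrable
      (fun p => Real.cos (ω * s) * Real.sin (ω * p) - Real.sin (ω * s) * Real.cos (ω * p))
      MeasureTheory.volume 0 s := by
    apply Continuous.intervalIntegrable; fun_prop
  rw [intervalIntegral.integral_eq_sub_of_hasDerivAt (fun p _ => key p) hint]
  simp
  field_simp
  linear_combination (-1) * Real.sin_sq_add_cos_sq (ω * s)

private lemma L2 (ω : ℝ) (hω : ω ≠ 0) (τ : ℝ) :
    (∫ s in (0:ℝ)..τ, (Real.cos (ω * s) - 1) / ω) =
      Real.sin (ω * τ) / ω ^ 2 - τ / ω := by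
  have key : ∀ s : ℝ, HasDerivAt
      (fun s => Real.sin (ω * s) / ω ^ 2 - s / ω) ((Real.cos (ω * s) - 1) / ω) s := by
    intro s
    have h1 := ((hlin ω s).sin).div_const (ω ^ 2)
    have h2 := (hasDerivAt_id s).div_const ω
    refine (h1.sub h2).congr_deriv ?_
    symm
    field_simp
  have hint : IntervalIntegrable (fun s => (Real.cos (ω * s) - 1) / ω)
      MeasureTheory.volume 0 τ := by
    apply Continuous.intervalIntegrable; fun_prop
  rw [intervalIntegral.integral_eq_sub_of_hasDerivAt (fun s _ => key s) hint]
  simp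

private lemma L3 (ω : ℝ) (hω : 0 < ω) :
    (∫ τ in (0:ℝ)..(2 * π / ω),
      Real.sin (ω * τ) * (Real.sin (ω * τ) / ω ^ 2 - τ / ω)) = 3 * π / ω ^ 3 := by
  have hω' : ω ≠ 0 := hω.ne'
  have key : ∀ τ : ℝ, HasDerivAt
      (fun τ => (τ / 2 - Real.sin (2 * ω * τ) / (4 * ω)) / ω ^ 2 -
        (Real.sin (ω * τ) / ω ^ 2 - τ * Real.cos (ω * τ) / ω) / ω)
      (Real.sin (ω * τ) * (Real.sin (ω * τ) / ω ^ 2 - τ / ω)) τ := by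
    intro τ
    have h1 := (hasDerivAt_id τ).div_const 2
    have h2 := (hlin (2 * ω) τ).sin.div_const (4 * ω)
    have h3 := (hlin ω τ).sin.div_const (ω ^ 2)
    have h4 := ((hasDerivAt_id τ).mul (hlin ω τ).cos).div_const ω
    have h := ((h1.sub h2).div_const (ω ^ 2)).sub ((h3.sub h4).div_const ω)
    refine h.congr_deriv ?_
    symm
    simp only [id]
    rw [show 2 * ω * τ = 2 * (ω * τ) by ring, Real.cos_two_mul']
    field_simp
    linear_combination 4 * Real.sin_sq_add_cos_sq (ω * τ)
  have hint : IntervalIntegrable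
      (fun τ => Real.sin (ω * τ) * (Real.sin (ω * τ) / ω ^ 2 - τ / ω))
      MeasureTheory.volume 0 (2 * π / ω) := by
    apply Continuous.intervalIntegrable; fun_prop
  rw [intervalIntegral.integral_eq_sub_of_hasDerivAt (fun τ _ => key τ) hint]
  have e1 : ω * (2 * π / ω) = 2 * π := by field_simp
  have e2 : 2 * ω * (2 * π / ω) = 2 * (2 * π) := by field_simp
  rw [e1, e2]
  simp [Real.sin_two_pi, Real.cos_two_pi, Real.sin_nat_mul_pi]
  rw [show (2:ℝ) * (2 * π) = 2 * (2 * π) by ring]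
  rw [show Real.sin (2 * (2 * π)) = 0 by
    rw [show (2:ℝ) * (2 * π) = (4:ℕ) * π by push_cast; ring, Real.sin_nat_mul_pi]]
  field_simp
  ring

theorem stmt_6 (ω : ℝ) (hω : 0 < ω) :
    (ω ^ 3 / (6 * π)) *
      ∫ τ in (0:ℝ)..(2 * π / ω), ∫ s in (0:ℝ)..τ, ∫ p in (0:ℝ)..s,
        Real.sin (ω * τ) *
          (Real.cos (ω * s) * Real.sin (ω * p) -
           Real.sin (ω * s) * Real.cos (ω * p)) = 1/2 := by
  have hω' : ω ≠ 0 := hω.ne'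
  have step : (∫ τ in (0:ℝ)..(2 * π / ω), ∫ s in (0:ℝ)..τ, ∫ p in (0:ℝ)..s,
        Real.sin (ω * τ) *
          (Real.cos (ω * s) * Real.sin (ω * p) -
           Real.sin (ω * s) * Real.cos (ω * p))) = 3 * π / ω ^ 3 := by
    rw [← L3 ω hω]
    apply intervalIntegral.integral_congr
    intro τ _
    simp only
    rw [← L2 ω hω' τ]
    rw [← intervalIntegral.integral_const_mul]
    apply intervalIntegral.integral_congr
    intro s _
    simp only
    rw [← L1 ω hω' s]
    rw [← intervalIntegral.integral_const_mul]
  rw [step]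
  field_simp
  ring
end

section
/- For ω > 0, ∫₀^{2π/ω} ∫₀^τ ∫₀^s cos(ωτ)(cos(ωs) sin(ωp) - sin(ωs) cos(ωp)) dp ds dτ = 0. -/
open Real intervalIntegral

lemma inner1 (ω : ℝ) (hω : ω ≠ 0) (c s : ℝ) :
    (∫ p in (0:ℝ)..s, c * (Real.cos (ω * s) * Real.sin (ω * p) -
        Real.sin (ω * s) * Real.cos (ω * p))) = c * ((Real.cos (ω * s) - 1) / ω) := by
  rw [intervalIntegral.integral_const_mul]
  rw [intervalIntegral.integral_sub, intervalIntegral.integral_const_mul,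
    intervalIntegral.integral_const_mul]
  · rw [intervalIntegral.integral_comp_mul_left _ hω, intervalIntegral.integral_comp_mul_left _ hω]
    simp only [integral_sin, integral_cos, smul_eq_mul, mul_zero, Real.cos_zero, Real.sin_zero]
    rw [div_eq_mul_inv]
    linear_combination (-c * ω⁻¹) * Real.sin_sq_add_cos_sq (ω*s)
  · exact Continuous.intervalIntegrable (by fun_prop) 0 s
  · exact Continuous.intervalIntegrable (by fun_prop) 0 s

lemma inner2 (ω : ℝ) (hω : ω ≠ 0) (c τ : ℝ) :
    (∫ s in (0:ℝ)..τ, c * ((Real.cos (ω * s) - 1) / ω)) =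
      c * (Real.sin (ω * τ) / ω - τ) / ω := by
  have h : ∀ s : ℝ, c * ((Real.cos (ω * s) - 1) / ω) = (c / ω) * Real.cos (ω * s) - c / ω :=
    fun s => by ring
  simp_rw [h]
  rw [intervalIntegral.integral_sub
      ((Continuous.intervalIntegrable (by fun_prop) 0 τ))
      (intervalIntegrable_const),
    intervalIntegral.integral_const_mul, intervalIntegral.integral_comp_mul_left _ hω,
    intervalIntegral.integral_const]
  simp only [integral_cos, smul_eq_mul, mul_zero, Real.sin_zero, sub_zero]
  field_simp

lemma level3 (ω : ℝ) (hω : ω ≠ 0) :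
    (∫ τ in (0:ℝ)..(2 * π / ω),
      Real.cos (ω * τ) * (Real.sin (ω * τ) / ω - τ) / ω) = 0 := by
  have key : ∀ x : ℝ, HasDerivAt
      (fun τ => Real.sin (ω*τ)^2/(2*ω^3) - τ * Real.sin (ω*τ)/ω^2 - Real.cos (ω*τ)/ω^3)
      (Real.cos (ω*x) * (Real.sin (ω*x)/ω - x)/ω) x := by
    intro x
    have h1 : HasDerivAt (fun τ : ℝ => ω*τ) ω x := by
      simpa using (hasDerivAt_id x).const_mul ω
    have hs : HasDerivAt (fun τ : ℝ => Real.sin (ω*τ)) (Real.cos (ω*x) * ω) x :=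
      (Real.hasDerivAt_sin (ω*x)).comp x h1
    have hc : HasDerivAt (fun τ : ℝ => Real.cos (ω*τ)) (-Real.sin (ω*x) * ω) x :=
      (Real.hasDerivAt_cos (ω*x)).comp x h1
    have h2 := hs.pow 2
    have h3 := (hasDerivAt_id x).mul hs
    have h4 := ((h2.div_const (2*ω^3)).sub (h3.div_const (ω^2))).sub (hc.div_const (ω^3))
    refine h4.congr_deriv ?_
    simp only [id]
    field_simp
    ring
  rw [intervalIntegral.integral_eq_sub_of_hasDerivAt (fun x _ => key x)
      (Continuous.intervalIntegrable (by fun_prop) _ _)]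
  have hT : ω * (2 * π / ω) = 2 * π := by field_simp
  rw [hT]
  simp [Real.sin_two_pi, Real.cos_two_pi]

theorem stmt_7 (ω : ℝ) (hω : 0 < ω) :
    (∫ τ in (0:ℝ)..(2 * π / ω), ∫ s in (0:ℝ)..τ, ∫ p in (0:ℝ)..s,
        Real.cos (ω * τ) *
          (Real.cos (ω * s) * Real.sin (ω * p) -
           Real.sin (ω * s) * Real.cos (ω * p))) = 0 := by
  have hω' := hω.ne'
  simp_rw [inner1 ω hω', inner2 ω hω']
  exact level3 ω hω'
end

section
/- For ω > 0, (ω³/(6π)) ∫₀^{2π/ω} ∫₀^τ ∫₀^s sin(ωτ)(cos(2ωs) sin(ωp) - sin(ωs) cos(2ωp)) dp ds dτ = -1/8. -/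
open Real intervalIntegral

lemma hsin (a p : ℝ) : HasDerivAt (fun x => Real.sin (a*x)) (a * Real.cos (a*p)) p := by
  simpa [mul_comm] using ((hasDerivAt_id' p).const_mul a).sin

lemma hcos (a p : ℝ) : HasDerivAt (fun x => Real.cos (a*x)) (-(a * Real.sin (a*p))) p := by
  have := ((hasDerivAt_id' p).const_mul a).cos
  simpa [mul_comm] using this

theorem stmt_8 (ω : ℝ) (hω : 0 < ω) :
    (ω ^ 3 / (6 * π)) *
      ∫ τ in (0:ℝ)..(2 * π / ω), ∫ s in (0:ℝ)..τ, ∫ p in (0:ℝ)..s,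
        Real.sin (ω * τ) *
          (Real.cos (2 * ω * s) * Real.sin (ω * p) -
           Real.sin (ω * s) * Real.cos (2 * ω * p)) = -1/8 := by
  have hω' : ω ≠ 0 := hω.ne'
  -- inner integral
  have h1 : ∀ τ s : ℝ, (∫ p in (0:ℝ)..s,
        Real.sin (ω * τ) *
          (Real.cos (2 * ω * s) * Real.sin (ω * p) -
           Real.sin (ω * s) * Real.cos (2 * ω * p)))
      = Real.sin (ω*τ) * (Real.cos (2*ω*s) * ((1 - Real.cos (ω*s))/ω)
          - Real.sin (ω*s) * (Real.sin (2*ω*s)/(2*ω))) := by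
    intro τ s
    have hd : ∀ p ∈ Set.uIcc (0:ℝ) s, HasDerivAt
        (fun p => Real.sin (ω*τ) * (Real.cos (2*ω*s) * (-Real.cos (ω*p)/ω)
          - Real.sin (ω*s) * (Real.sin ((2*ω)*p)/(2*ω))))
        (Real.sin (ω * τ) *
          (Real.cos (2 * ω * s) * Real.sin (ω * p) -
           Real.sin (ω * s) * Real.cos (2 * ω * p))) p := by
      intro p _
      have d1 : HasDerivAt (fun p => -Real.cos (ω*p)/ω) (Real.sin (ω*p)) p := by
        have := ((hcos ω p).neg).div_const ω
        refine this.congr_deriv (Eq.symm ?_)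
        field_simp
      have d2 : HasDerivAt (fun p => Real.sin ((2*ω)*p)/(2*ω)) (Real.cos (2*ω*p)) p := by
        have := (hsin (2*ω) p).div_const (2*ω)
        refine this.congr_deriv (Eq.symm ?_)
        field_simp
      exact ((d1.const_mul (Real.cos (2*ω*s))).sub (d2.const_mul (Real.sin (ω*s)))).const_mul
        (Real.sin (ω*τ))
    rw [intervalIntegral.integral_eq_sub_of_hasDerivAt hd
      (by apply Continuous.intervalIntegrable; fun_prop)]
    simp only [mul_zero, Real.cos_zero, Real.sin_zero]
    ring
  -- middle integral
  have h2 : ∀ τ : ℝ, (∫ s in (0:ℝ)..τ,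
        Real.sin (ω*τ) * (Real.cos (2*ω*s) * ((1 - Real.cos (ω*s))/ω)
          - Real.sin (ω*s) * (Real.sin (2*ω*s)/(2*ω))))
      = (Real.sin (ω*τ)/ω^2) * (Real.sin (2*ω*τ)/2 - Real.sin (ω*τ)
          + (Real.sin (ω*τ))^3/3) := by
    intro τ
    have hd : ∀ s ∈ Set.uIcc (0:ℝ) τ, HasDerivAt
        (fun s => (Real.sin (ω*τ)/ω^2) * (Real.sin ((2*ω)*s)/2 - Real.sin (ω*s)
          + (Real.sin (ω*s))^3/3))
        (Real.sin (ω*τ) * (Real.cos (2*ω*s) * ((1 - Real.cos (ω*s))/ω)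
          - Real.sin (ω*s) * (Real.sin (2*ω*s)/(2*ω)))) s := by
      intro s _
      have d : HasDerivAt (fun s => Real.sin ((2*ω)*s)/2 - Real.sin (ω*s)
          + (Real.sin (ω*s))^3/3)
          ((2*ω) * Real.cos ((2*ω)*s)/2 - ω * Real.cos (ω*s)
            + (3 * Real.sin (ω*s)^2 * (ω * Real.cos (ω*s)))/3) s :=
        (((hsin (2*ω) s).div_const 2).sub (hsin ω s)).add (((hsin ω s).pow 3).div_const 3)
      have := d.const_mul (Real.sin (ω*τ)/ω^2)
      refine this.congr_deriv (Eq.symm ?_)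
      have e1 : Real.sin (2*ω*s) = 2 * Real.sin (ω*s) * Real.cos (ω*s) := by
        rw [show (2*ω*s) = 2*(ω*s) by ring, Real.sin_two_mul]
      have e2 : Real.cos (2*ω*s) = 2 * Real.cos (ω*s)^2 - 1 := by
        rw [show (2*ω*s) = 2*(ω*s) by ring, Real.cos_two_mul]
      have e3 : Real.sin (ω*s)^2 = 1 - Real.cos (ω*s)^2 := Real.sin_sq (ω*s)
      rw [e1, e2]
      field_simp
      linear_combination (-2*Real.sin (ω*τ)*Real.cos (ω*s)) * Real.sin_sq_add_cos_sq (ω*s)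
    rw [intervalIntegral.integral_eq_sub_of_hasDerivAt hd
      (by apply Continuous.intervalIntegrable; fun_prop)]
    simp only [mul_zero, Real.cos_zero, Real.sin_zero]
    ring
  simp only [h1, h2]
  -- outer integral
  have h3 : (∫ τ in (0:ℝ)..(2*π/ω),
        (Real.sin (ω*τ)/ω^2) * (Real.sin (2*ω*τ)/2 - Real.sin (ω*τ)
          + (Real.sin (ω*τ))^3/3))
      = -3*π/(4*ω^3) := by
    have hd : ∀ τ ∈ Set.uIcc (0:ℝ) (2*π/ω), HasDerivAt
        (fun τ => (1/ω^3) * ((Real.sin (ω*τ))^3/3 - (ω*τ/2 - Real.sin (ω*τ)*Real.cos (ω*τ)/2)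
          + (ω*τ/8 - (Real.sin (ω*τ))^3*Real.cos (ω*τ)/12 - Real.sin (ω*τ)*Real.cos (ω*τ)/8)))
        ((Real.sin (ω*τ)/ω^2) * (Real.sin (2*ω*τ)/2 - Real.sin (ω*τ)
          + (Real.sin (ω*τ))^3/3)) τ := by
      intro τ _
      have ds := hsin ω τ
      have dc := hcos ω τ
      have dlin : HasDerivAt (fun τ => ω*τ) ω τ := by
        simpa using (hasDerivAt_id τ).const_mul ω
      have d : HasDerivAt (fun τ => (Real.sin (ω*τ))^3/3 - (ω*τ/2 - Real.sin (ω*τ)*Real.cos (ω*τ)/2)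
          + (ω*τ/8 - (Real.sin (ω*τ))^3*Real.cos (ω*τ)/12 - Real.sin (ω*τ)*Real.cos (ω*τ)/8))
          ((3 * Real.sin (ω*τ)^2 * (ω * Real.cos (ω*τ)))/3
            - (ω/2 - ((ω * Real.cos (ω*τ)) * Real.cos (ω*τ) + Real.sin (ω*τ) * (-(ω * Real.sin (ω*τ))))/2)
            + (ω/8 - ((3 * Real.sin (ω*τ)^2 * (ω * Real.cos (ω*τ))) * Real.cos (ω*τ)
                + (Real.sin (ω*τ))^3 * (-(ω * Real.sin (ω*τ))))/12
              - ((ω * Real.cos (ω*τ)) * Real.cos (ω*τ) + Real.sin (ω*τ) * (-(ω * Real.sin (ω*τ))))/8)) τ :=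
        ((((ds.pow 3).div_const 3).sub ((dlin.div_const 2).sub ((ds.mul dc).div_const 2))).add
          (((dlin.div_const 8).sub (((ds.pow 3).mul dc).div_const 12)).sub ((ds.mul dc).div_const 8)))
      have := d.const_mul (1/ω^3)
      refine this.congr_deriv (Eq.symm ?_)
      have e1 : Real.sin (2*ω*τ) = 2 * Real.sin (ω*τ) * Real.cos (ω*τ) := by
        rw [show (2*ω*τ) = 2*(ω*τ) by ring, Real.sin_two_mul]
      rw [e1]
      field_simp
      linear_combination (144*Real.sin (ω*τ)^2 - 216) * Real.sin_sq_add_cos_sq (ω*τ)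
    rw [intervalIntegral.integral_eq_sub_of_hasDerivAt hd
      (by apply Continuous.intervalIntegrable; fun_prop)]
    have hx : ω * (2*π/ω) = 2*π := by field_simp
    rw [hx]
    simp only [Real.sin_two_pi, Real.cos_two_pi, mul_zero, zero_mul, Real.sin_zero, Real.cos_zero]
    field_simp
    ring
  rw [h3]
  have hπ : (π:ℝ) ≠ 0 := Real.pi_ne_zero
  field_simp
  ring
end

section
/- For ω > 0, (ω³/(6π)) ∫₀^{2π/ω} ∫₀^τ ∫₀^s cos(ωτ)(cos(2ωs) cos(ωp) - cos(ωs) cos(2ωp)) dp ds dτ = 1/8. -/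
open Real intervalIntegral

theorem stmt_9 (ω : ℝ) (hω : 0 < ω) :
    (ω ^ 3 / (6 * π)) *
      ∫ τ in (0:ℝ)..(2 * π / ω), ∫ s in (0:ℝ)..τ, ∫ p in (0:ℝ)..s,
        Real.cos (ω * τ) *
          (Real.cos (2 * ω * s) * Real.cos (ω * p) -
           Real.cos (ω * s) * Real.cos (2 * ω * p)) = 1/8 := by
  have hω' : ω ≠ 0 := ne_of_gt hω
  -- innermost integral
  have inner : ∀ τ s : ℝ,
      (∫ p in (0:ℝ)..s, Real.cos (ω * τ) *
        (Real.cos (2 * ω * s) * Real.cos (ω * p) -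
         Real.cos (ω * s) * Real.cos (2 * ω * p)))
      = Real.cos (ω * τ) * (-(Real.sin (ω * s)) ^ 3 / ω) := by
    intro τ s
    rw [intervalIntegral.integral_const_mul]
    congr 1
    have hderiv : ∀ p ∈ Set.uIcc (0:ℝ) s,
        HasDerivAt (fun p => (Real.cos (2 * ω * s) * Real.sin (ω * p)
            - Real.cos (ω * s) * Real.sin (2 * ω * p) / 2) / ω)
          (Real.cos (2 * ω * s) * Real.cos (ω * p) -
           Real.cos (ω * s) * Real.cos (2 * ω * p)) p := by
      intro p _
      have h1 : HasDerivAt (fun x : ℝ => Real.sin (ω * x))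
          (Real.cos (ω * p) * (ω * 1)) p := ((hasDerivAt_id p).const_mul ω).sin
      have h2 : HasDerivAt (fun x : ℝ => Real.sin (2 * ω * x))
          (Real.cos (2 * ω * p) * (2 * ω * 1)) p :=
        ((hasDerivAt_id p).const_mul (2 * ω)).sin
      have := (((h1.const_mul (Real.cos (2 * ω * s))).sub
        ((h2.const_mul (Real.cos (ω * s))).div_const 2)).div_const ω)
      refine this.congr_deriv (Eq.symm ?_)
      field_simp
    have hint : IntervalIntegrable (fun p =>
        Real.cos (2 * ω * s) * Real.cos (ω * p) -
        Real.cos (ω * s) * Real.cos (2 * ω * p)) MeasureTheory.volume 0 s := by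
      apply Continuous.intervalIntegrable; fun_prop
    have key := intervalIntegral.integral_eq_sub_of_hasDerivAt hderiv hint
    rw [key]
    have h2c : Real.cos (2 * ω * s) = 2 * Real.cos (ω * s) ^ 2 - 1 := by
      rw [show (2:ℝ) * ω * s = 2 * (ω * s) by ring, Real.cos_two_mul]
    have h2s : Real.sin (2 * ω * s) = 2 * Real.sin (ω * s) * Real.cos (ω * s) := by
      rw [show (2:ℝ) * ω * s = 2 * (ω * s) by ring, Real.sin_two_mul]
    have hpy := Real.sin_sq_add_cos_sq (ω * s)
    simp only [mul_zero, Real.sin_zero, sub_zero, zero_div]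
    linear_combination (Real.sin (ω * s) / ω) * h2c
      - (Real.cos (ω * s) / (2 * ω)) * h2s + (Real.sin (ω * s) / ω) * hpy
  -- middle integral
  have mid : ∀ τ : ℝ,
      (∫ s in (0:ℝ)..τ, Real.cos (ω * τ) * (-(Real.sin (ω * s)) ^ 3 / ω))
      = Real.cos (ω * τ) *
          ((Real.cos (ω * τ) - Real.cos (ω * τ) ^ 3 / 3 - 2 / 3) / ω ^ 2) := by
    intro τ
    rw [intervalIntegral.integral_const_mul]
    congr 1
    have hderiv : ∀ s ∈ Set.uIcc (0:ℝ) τ,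
        HasDerivAt (fun s => (Real.cos (ω * s) - Real.cos (ω * s) ^ 3 / 3) / ω ^ 2)
          (-(Real.sin (ω * s)) ^ 3 / ω) s := by
      intro s _
      have hc : HasDerivAt (fun x : ℝ => Real.cos (ω * x))
          (-Real.sin (ω * s) * (ω * 1)) s := ((hasDerivAt_id s).const_mul ω).cos
      have := ((hc.sub ((hc.pow 3).div_const 3)).div_const (ω ^ 2))
      refine this.congr_deriv (Eq.symm ?_)
      have hpy := Real.sin_sq_add_cos_sq (ω * s)
      field_simp
      linear_combination (-3 * Real.sin (ω * s)) * hpy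
    have hint : IntervalIntegrable (fun s : ℝ => -(Real.sin (ω * s)) ^ 3 / ω)
        MeasureTheory.volume 0 τ := by
      apply Continuous.intervalIntegrable; fun_prop
    have key := intervalIntegral.integral_eq_sub_of_hasDerivAt hderiv hint
    rw [key]
    simp only [mul_zero, Real.cos_zero]
    field_simp
    ring
  -- outer integral
  have outer :
      (∫ τ in (0:ℝ)..(2 * π / ω), Real.cos (ω * τ) *
          ((Real.cos (ω * τ) - Real.cos (ω * τ) ^ 3 / 3 - 2 / 3) / ω ^ 2))
      = 3 * π / (4 * ω ^ 3) := by
    have hderiv : ∀ τ ∈ Set.uIcc (0:ℝ) (2 * π / ω),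
        HasDerivAt (fun τ => (τ / 2 + Real.sin (ω * τ) * Real.cos (ω * τ) / (2 * ω)
            - (3 * τ / 8 + Real.sin (ω * τ) * Real.cos (ω * τ) ^ 3 / (4 * ω)
               + 3 * (Real.sin (ω * τ) * Real.cos (ω * τ)) / (8 * ω)) / 3
            - 2 * Real.sin (ω * τ) / (3 * ω)) / ω ^ 2)
          (Real.cos (ω * τ) *
            ((Real.cos (ω * τ) - Real.cos (ω * τ) ^ 3 / 3 - 2 / 3) / ω ^ 2)) τ := by
      intro τ _
      have hs : HasDerivAt (fun x : ℝ => Real.sin (ω * x))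
          (Real.cos (ω * τ) * (ω * 1)) τ := ((hasDerivAt_id τ).const_mul ω).sin
      have hc : HasDerivAt (fun x : ℝ => Real.cos (ω * x))
          (-Real.sin (ω * τ) * (ω * 1)) τ := ((hasDerivAt_id τ).const_mul ω).cos
      have t1 : HasDerivAt (fun x : ℝ => x / 2) ((1:ℝ) / 2) τ :=
        (hasDerivAt_id τ).div_const 2
      have t2 := (hs.mul hc).div_const (2 * ω)
      have t3a : HasDerivAt (fun x : ℝ => 3 * x / 8) ((3 * 1 : ℝ) / 8) τ :=
        ((hasDerivAt_id τ).const_mul 3).div_const 8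
      have t3b := (hs.mul (hc.pow 3)).div_const (4 * ω)
      have t3c := ((hs.mul hc).const_mul 3).div_const (8 * ω)
      have t4 := (hs.const_mul 2).div_const (3 * ω)
      have := (((t1.add t2).sub (((t3a.add t3b).add t3c).div_const 3)).sub
        t4).div_const (ω ^ 2)
      refine this.congr_deriv (Eq.symm ?_)
      have hpy := Real.sin_sq_add_cos_sq (ω * τ)
      simp only [Pi.pow_apply]
      field_simp
      linear_combination (72 - 48 * Real.cos (ω * τ) ^ 2) * hpy
    have hint : IntervalIntegrable (fun τ : ℝ => Real.cos (ω * τ) *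
        ((Real.cos (ω * τ) - Real.cos (ω * τ) ^ 3 / 3 - 2 / 3) / ω ^ 2))
        MeasureTheory.volume 0 (2 * π / ω) := by
      apply Continuous.intervalIntegrable; fun_prop
    have key := intervalIntegral.integral_eq_sub_of_hasDerivAt hderiv hint
    rw [key]
    have hT : ω * (2 * π / ω) = 2 * π := by field_simp
    simp only [hT, Real.sin_two_pi, Real.cos_two_pi, mul_zero, zero_mul,
      Real.sin_zero, Real.cos_zero, zero_div, mul_one]
    field_simp
    ring
  simp only [inner, mid, outer]
  have hπ : (π : ℝ) ≠ 0 := Real.pi_ne_zero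
  field_simp
  ring
end

section
/- Let α, ω₀ > 0, J₀ = [[0, ω₀], [-ω₀, 0]], Λ̃ = [[0, 0], [0, -α/2]], and P = [[α/(4ω₀²) + 2/α, 1/(2ω₀)], [1/(2ω₀), 2/α]]. Then P is symmetric positive definite and P(J₀ + Λ̃) + (J₀ + Λ̃)ᵀ P = -I. -/
open Matrix

theorem stmt_11 (α ω₀ : ℝ) (hα : 0 < α) (hω₀ : 0 < ω₀)
    (J₀ Λ P : Matrix (Fin 2) (Fin 2) ℝ)
    (hJ : J₀ = !![0, ω₀; -ω₀, 0])
    (hΛ : Λ = !![0, 0; 0, -α/2])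
    (hP : P = !![α/(4*ω₀^2) + 2/α, 1/(2*ω₀); 1/(2*ω₀), 2/α]) :
    P.IsSymm ∧ P.PosDef ∧ P * (J₀ + Λ) + (J₀ + Λ)ᵀ * P = -1 := by
  subst hJ hΛ hP
  have hα' := hα.ne'
  have hω' := hω₀.ne'
  refine ⟨?_, ?_, ?_⟩
  · ext i j
    fin_cases i <;> fin_cases j <;> simp [Matrix.IsSymm]
  · rw [Matrix.posDef_iff_dotProduct_mulVec]
    constructor
    · ext i j
      fin_cases i <;> fin_cases j <;> simp [Matrix.IsHermitian]
    · intro x hx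
      have hq : star x ⬝ᵥ (!![α/(4*ω₀^2) + 2/α, 1/(2*ω₀); 1/(2*ω₀), 2/α]).mulVec x
          = (α/(8*ω₀^2) + 2/α) * (x 0)^2 + (2/α) * (x 1 + α*(x 0)/(4*ω₀))^2 := by
        simp [dotProduct, Matrix.mulVec, Fin.sum_univ_two]
        field_simp
        ring
      rw [hq]
      have hx' : x 0 ≠ 0 ∨ x 1 ≠ 0 := by
        by_contra h
        push_neg at h
        exact hx (by ext i; fin_cases i <;> simp [h.1, h.2])
      have hc1 : 0 < α/(8*ω₀^2) + 2/α := by positivity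
      have hc2 : 0 < 2/α := by positivity
      rcases hx' with h | h
      · nlinarith [sq_nonneg (x 1 + α*(x 0)/(4*ω₀)), pow_two_pos_of_ne_zero h]
      · have h2 : x 1 + α*(x 0)/(4*ω₀) ≠ 0 ∨ x 0 ≠ 0 := by
          by_cases h0 : x 0 = 0
          · left; simpa [h0] using h
          · right; exact h0
        rcases h2 with h2 | h2 <;>
          nlinarith [sq_nonneg (x 1 + α*(x 0)/(4*ω₀)), sq_nonneg (x 0),
            pow_two_pos_of_ne_zero h2]
  · ext i j
    fin_cases i <;> fin_cases j <;>
      simp [Matrix.mul_apply, Fin.sum_univ_two, Matrix.one_apply, Matrix.vecHead, Matrix.vecTail] <;> field_simp <;> ring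
end

section
/- Let α, ω₀ > 0, A = [[0, ω₀], [-ω₀, -α/2]], Λ̃ = [[0,0],[0,-α/2]], P the solution of PA + AᵀP = -I as above, G = PΛ̃ + Λ̃ᵀP, and b = ‖G‖²/(2λ_min(P)). Then for all z ∈ ℝ² and u ∈ ℝ, -|z|² + (e^u - 1)⟨z, Gz⟩ - b(e^u - 1)²(1 + ⟨z, Pz⟩) ≤ -(1/2)|z|² - b(e^u - 1)². -/
open Matrix RealInnerProductSpace Polynomial

lemma charpoly_eval_fin_two (M : Matrix (Fin 2) (Fin 2) ℝ) (μ : ℝ) :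
    eval μ M.charpoly = (μ - M 0 0)*(μ - M 1 1) - M 0 1 * M 1 0 := by
  rw [Matrix.charpoly, Matrix.det_fin_two]
  simp [charmatrix_apply_eq, charmatrix_apply_ne]

lemma inner_clm_fin_two (M : Matrix (Fin 2) (Fin 2) ℝ) (z : EuclideanSpace ℝ (Fin 2)) :
    ⟪z, (Matrix.toEuclideanCLM (𝕜 := ℝ) M) z⟫ =
      z 0 * (M 0 0 * z 0 + M 0 1 * z 1) + z 1 * (M 1 0 * z 0 + M 1 1 * z 1) := by
  have h := Matrix.ofLp_toEuclideanCLM (𝕜 := ℝ) M z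
  rw [PiLp.inner_apply]
  have h0 : (Matrix.toEuclideanCLM (𝕜 := ℝ) M) z 0 = (M *ᵥ (WithLp.equiv _ _ z)) 0 := congrFun h 0
  have h1 : (Matrix.toEuclideanCLM (𝕜 := ℝ) M) z 1 = (M *ᵥ (WithLp.equiv _ _ z)) 1 := congrFun h 1
  simp [Fin.sum_univ_two, h0, h1, Matrix.mulVec, dotProduct, mul_comm]

lemma norm_sq_fin_two (z : EuclideanSpace ℝ (Fin 2)) : ‖z‖^2 = z 0^2 + z 1^2 := by
  rw [EuclideanSpace.norm_eq, Real.sq_sqrt (by positivity)]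
  simp [Fin.sum_univ_two, sq]

set_option maxHeartbeats 1000000 in
theorem stmt_19 (α ω₀ : ℝ) (hα : 0 < α) (hω₀ : 0 < ω₀)
    (A Λ P G : Matrix (Fin 2) (Fin 2) ℝ)
    (hA : A = !![0, ω₀; -ω₀, -α/2])
    (hΛ : Λ = !![0, 0; 0, -α/2])
    (hP : P = !![α/(4*ω₀^2) + 2/α, 1/(2*ω₀); 1/(2*ω₀), 2/α])
    (hLyap : P * A + Aᵀ * P = -1)
    (hG : G = P * Λ + Λᵀ * P)
    (lmin : ℝ)
    (hroot : P.charpoly.IsRoot lmin)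
    (hmin : ∀ μ : ℝ, P.charpoly.IsRoot μ → lmin ≤ μ)
    (b : ℝ)
    (hb : b = ‖Matrix.toEuclideanCLM (𝕜 := ℝ) G‖^2 / (2 * lmin)) :
    ∀ (z : EuclideanSpace ℝ (Fin 2)) (u : ℝ),
      -‖z‖^2 + (Real.exp u - 1) * ⟪z, (Matrix.toEuclideanCLM (𝕜 := ℝ) G) z⟫
        - b * (Real.exp u - 1)^2 * (1 + ⟪z, (Matrix.toEuclideanCLM (𝕜 := ℝ) P) z⟫)
      ≤ -(1/2) * ‖z‖^2 - b * (Real.exp u - 1)^2 := by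
  intro z u
  set s := Real.exp u - 1 with hs
  -- entries of P
  have hp00 : P 0 0 = α/(4*ω₀^2) + 2/α := by rw [hP]; simp
  have hp01 : P 0 1 = 1/(2*ω₀) := by rw [hP]; simp
  have hp10 : P 1 0 = 1/(2*ω₀) := by rw [hP]; simp
  have hp11 : P 1 1 = 2/α := by rw [hP]; simp
  -- positivity of trace and determinant of P
  have htr : 0 < P 0 0 + P 1 1 := by rw [hp00, hp11]; positivity
  have hdet : 0 < P 0 0 * P 1 1 - P 0 1 * P 1 0 := by
    rw [hp00, hp01, hp10, hp11]
    have h1 : (α/(4*ω₀^2) + 2/α) * (2/α) - 1/(2*ω₀) * (1/(2*ω₀))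
        = 1/(4*ω₀^2) + 4/α^2 := by field_simp; ring
    rw [h1]; positivity
  -- lmin is a root of the quadratic
  have hr : (lmin - P 0 0) * (lmin - P 1 1) - P 0 1 * P 1 0 = 0 := by
    have := hroot
    rwa [Polynomial.IsRoot, charpoly_eval_fin_two] at this
  have hsq : 0 < P 0 1 * P 1 0 := by rw [hp01, hp10]; positivity
  -- lmin > 0
  have hlpos : 0 < lmin := by nlinarith [hr, hdet, htr, sq_nonneg lmin]
  -- the other root
  have hother : lmin ≤ P 0 0 + P 1 1 - lmin := by
    apply hmin
    rw [Polynomial.IsRoot, charpoly_eval_fin_two]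
    nlinarith [hr]
  have ha : 0 < P 0 0 - lmin := by nlinarith [hr, hother, hsq]
  have hc : 0 < P 1 1 - lmin := by nlinarith [hr, hother, hsq]
  -- quadratic form bound: ⟪z, Pz⟫ ≥ lmin ‖z‖²
  have hPsd : lmin * (z 0 ^ 2 + z 1 ^ 2) ≤ ⟪z, (Matrix.toEuclideanCLM (𝕜 := ℝ) P) z⟫ := by
    rw [inner_clm_fin_two]
    have hsym : P 1 0 = P 0 1 := by rw [hp01, hp10]
    rw [hsym]
    have hac : (P 0 0 - lmin) * (P 1 1 - lmin) = P 0 1 ^ 2 := by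
      linear_combination hr + P 0 1 * hsym
    nlinarith [sq_nonneg ((P 0 0 - lmin) * z 0 + P 0 1 * z 1), hac, ha, hc,
      sq_nonneg (z 1), mul_pos ha hc]
  set N : ℝ := ‖Matrix.toEuclideanCLM (𝕜 := ℝ) G‖ with hN
  have hN0 : 0 ≤ N := norm_nonneg _
  have hb0 : 0 ≤ b := by rw [hb]; positivity
  have hbe : b * (2 * lmin) = N ^ 2 := by
    rw [hb]; field_simp
  -- bound on the G term
  have hGb : s * ⟪z, (Matrix.toEuclideanCLM (𝕜 := ℝ) G) z⟫ ≤ |s| * N * ‖z‖^2 := by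
    have h1 : |⟪z, (Matrix.toEuclideanCLM (𝕜 := ℝ) G) z⟫| ≤ N * ‖z‖^2 := by
      calc |⟪z, (Matrix.toEuclideanCLM (𝕜 := ℝ) G) z⟫|
          ≤ ‖z‖ * ‖(Matrix.toEuclideanCLM (𝕜 := ℝ) G) z‖ := abs_real_inner_le_norm _ _
        _ ≤ ‖z‖ * (N * ‖z‖) := by
            gcongr
            exact ContinuousLinearMap.le_opNorm _ _
        _ = N * ‖z‖^2 := by ring
    calc s * ⟪z, (Matrix.toEuclideanCLM (𝕜 := ℝ) G) z⟫
        ≤ |s * ⟪z, (Matrix.toEuclideanCLM (𝕜 := ℝ) G) z⟫| := le_abs_self _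
      _ = |s| * |⟪z, (Matrix.toEuclideanCLM (𝕜 := ℝ) G) z⟫| := abs_mul _ _
      _ ≤ |s| * (N * ‖z‖^2) := by gcongr
      _ = |s| * N * ‖z‖^2 := by ring
  have hnz : ‖z‖^2 = z 0 ^ 2 + z 1 ^ 2 := norm_sq_fin_two z
  have hnz0 : 0 ≤ ‖z‖^2 := sq_nonneg _
  rw [← hnz] at hPsd
  have key : b * s ^ 2 * (lmin * ‖z‖^2) ≤ b * s ^ 2 * ⟪z, (Matrix.toEuclideanCLM (𝕜 := ℝ) P) z⟫ := by
    apply mul_le_mul_of_nonneg_left hPsd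
    positivity
  have h5 : |s| * N * ‖z‖^2 ≤ (1/2) * ‖z‖^2 + (1/2) * (|s| * N)^2 * ‖z‖^2 := by
    nlinarith [mul_nonneg hnz0 (sq_nonneg (1 - |s| * N))]
  have h6 : (|s| * N)^2 = s^2 * N^2 := by rw [mul_pow, sq_abs]
  rw [h6] at h5
  have h8 : (1/2) * s^2 * N^2 * ‖z‖^2 = b * s^2 * (lmin * ‖z‖^2) := by
    rw [← hbe]; ring
  clear_value s N
  nlinarith [hGb, h5, h8, key]
end
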